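/- arXiv:2106.10105 — 2 statements merged into one kernel-verified Lean document; each statement's English description precedes it below -/
import Mathlib

section
/- Let X be an m×n Boolean matrix and let I be a finite set of positions (i,j) with X_{i,j}=1 that are pairwise incompatible. Then for every m×k Boolean matrix A and k×n Boolean matrix B such that A∘B undercovers X, the number of positions (i,j) ∈ I with (A∘B)_{i,j}=1 is at most k. -/
/-- Boolean product of an `m × k` and a `k × n` Boolean matrix:
`(A ∘ B) i j = ⋁ ℓ, A i ℓ ∧ B ℓ j`. -/
def bProd {m k n : ℕ} (A : Fin m → Fin k → Bool) (B : Fin k → Fin n → Bool) :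
    Fin m → Fin n → Bool :=
  fun i j => decide (∃ ℓ, A i ℓ = true ∧ B ℓ j = true)

/-- `D` undercovers `X`: there are no `i, j` with `X i j = 0` and `D i j = 1`. -/
def undercovers {m n : ℕ} (D X : Fin m → Fin n → Bool) : Prop :=
  ∀ i j, X i j = false → D i j = false

/-- `|M|₁`: the number of `1`-entries of the Boolean matrix `M`. -/
def ones {m n : ℕ} (M : Fin m → Fin n → Bool) : ℕ :=
  (Finset.univ.filter fun p : Fin m × Fin n => M p.1 p.2 = true).card

theorem pairwise_incompatible_covered_le_rank {m n k : ℕ} (X : Fin m → Fin n → Bool)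
    (I : Finset (Fin m × Fin n))
    (hone : ∀ p ∈ I, X p.1 p.2 = true)
    (hpair : ∀ p ∈ I, ∀ q ∈ I, p ≠ q → X p.1 q.2 = false ∨ X q.1 p.2 = false)
    (A : Fin m → Fin k → Bool) (B : Fin k → Fin n → Bool)
    (hU : undercovers (bProd A B) X) :
    (I.filter fun p => bProd A B p.1 p.2 = true).card ≤ k := by
  classical
  rcases (I.filter fun p => bProd A B p.1 p.2 = true).eq_empty_or_nonempty with he | ⟨p₀, hp₀⟩
  · simp [he]
  have hcov : ∀ p ∈ I.filter (fun p => bProd A B p.1 p.2 = true),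
      ∃ ℓ : Fin k, A p.1 ℓ = true ∧ B ℓ p.2 = true := by
    intro p hp
    have := (Finset.mem_filter.mp hp).2
    simpa [bProd] using this
  have hk : Nonempty (Fin k) := ⟨(hcov p₀ hp₀).choose⟩
  set g : Fin m × Fin n → Fin k := fun p =>
    if h : ∃ ℓ : Fin k, A p.1 ℓ = true ∧ B ℓ p.2 = true then h.choose else Classical.arbitrary _
    with hg
  have hgspec : ∀ p ∈ I.filter (fun p => bProd A B p.1 p.2 = true),
      A p.1 (g p) = true ∧ B (g p) p.2 = true := by
    intro p hp
    have h := hcov p hp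
    rw [hg]
    simp only [dif_pos h]
    exact h.choose_spec
  have key : (I.filter fun p => bProd A B p.1 p.2 = true).card
      ≤ (Finset.univ : Finset (Fin k)).card := by
    apply Finset.card_le_card_of_injOn g (fun p _ => Finset.mem_univ _)
    intro p hp q hq hpq
    simp only [Finset.mem_coe] at hp hq
    by_contra hne
    have hpI := (Finset.mem_filter.mp hp).1
    have hqI := (Finset.mem_filter.mp hq).1
    have h1 : bProd A B p.1 q.2 = true := by
      simp only [bProd, decide_eq_true_eq]
      exact ⟨g p, (hgspec p hp).1, hpq ▸ (hgspec q hq).2⟩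
    have h2 : bProd A B q.1 p.2 = true := by
      simp only [bProd, decide_eq_true_eq]
      exact ⟨g q, (hgspec q hq).1, hpq ▸ (hgspec p hp).2⟩
    rcases hpair p hpI q hqI hne with h | h
    · have := hU p.1 q.2 h; simp [this] at h1
    · have := hU q.1 p.2 h; simp [this] at h2
  simpa using key
end

section
/- Let X be an m×n Boolean matrix and let I be a finite set of positions (i,j) with X_{i,j}=1 that are pairwise incompatible. If |I| > k, then there is no exact rank-k Boolean factorization of X, i.e., there are no m×k Boolean matrix A and k×n Boolean matrix B with A∘B = X. -/
theorem no_exact_factorization_of_large_incompatible_set {m n k : ℕ}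
    (X : Fin m → Fin n → Bool) (I : Finset (Fin m × Fin n))
    (hone : ∀ p ∈ I, X p.1 p.2 = true)
    (hpair : ∀ p ∈ I, ∀ q ∈ I, p ≠ q → X p.1 q.2 = false ∨ X q.1 p.2 = false)
    (hcard : k < I.card) :
    ¬ ∃ (A : Fin m → Fin k → Bool) (B : Fin k → Fin n → Bool), bProd A B = X := by
  rintro ⟨A, B, hAB⟩
  -- each p ∈ I yields an ℓ with A p.1 ℓ = true and B ℓ p.2 = true
  have hex : ∀ p ∈ I, ∃ ℓ : Fin k, A p.1 ℓ = true ∧ B ℓ p.2 = true := by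
    intro p hp
    have h1 : bProd A B p.1 p.2 = true := by rw [hAB]; exact hone p hp
    simpa [bProd] using h1
  choose f hf using hex
  -- pigeonhole: |I| > k, so f is not injective
  have : ∃ (p : Fin m × Fin n) (hp : p ∈ I) (q : Fin m × Fin n) (hq : q ∈ I),
      p ≠ q ∧ f p hp = f q hq := by
    by_contra h
    push_neg at h
    have := Finset.card_le_card_of_injOn (f := fun p : {x // x ∈ I} => f p.1 p.2)
      (s := Finset.univ) (t := Finset.univ)
      (fun _ _ => Finset.mem_univ _) (by
        intro a _ b _ hab
        by_contra hne
        exact h a.1 a.2 b.1 b.2 (fun e => hne (Subtype.ext e)) hab)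
    simp at this
    omega
  obtain ⟨p, hp, q, hq, hne, heq⟩ := this
  -- X p.1 q.2 = true via shared column
  have h1 : X p.1 q.2 = true := by
    rw [← hAB]
    simp only [bProd, decide_eq_true_eq]
    exact ⟨f p hp, (hf p hp).1, heq ▸ (hf q hq).2⟩
  have h2 : X q.1 p.2 = true := by
    rw [← hAB]
    simp only [bProd, decide_eq_true_eq]
    exact ⟨f q hq, (hf q hq).1, heq ▸ (hf p hp).2⟩
  rcases hpair p hp q hq hne with h | h
  · rw [h1] at h; exact Bool.noConfusion h
  · rw [h2] at h; exact Bool.noConfusion h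
end
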